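/- arXiv:1209.5170 — 2 statements merged into one kernel-verified Lean document; each statement's English description precedes it below -/
import Mathlib

section
/- Fix k ≥ 1 and distinct reals 2 > β_1 > β_2 > … > β_k ≥ 0. For v̄ = (v_2, …, v_{2k}) ∈ (1,∞)^{2k−1}, define the 2k × 2k matrix Σ(v̄) by Σ(v̄)_{l,i} = v_l^{−β_i} for 1 ≤ i ≤ k and Σ(v̄)_{l,i} = v_l^{−β_{i−k}} · log v_l for k+1 ≤ i ≤ 2k, where v_1 = 1. Then the set of v̄ ∈ (1,∞)^{2k−1} for which Σ(v̄) is not invertible has (2k−1)-dimensional Lebesgue measure zero. -/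
open MeasureTheory

/-- The `2k × 2k` matrix `Σ(vb)` with entries `Σ_{l,i} = v_l^{-β_i}` for `i < k` and
`Σ_{l,i} = v_l^{-β_{i-k}} · log v_l` for `k ≤ i < 2k` (indices `0`-based). -/
noncomputable def sigmaMatrix (k : ℕ) (β : ℕ → ℝ) (v : ℕ → ℝ) :
    Matrix (Fin (2 * k)) (Fin (2 * k)) ℝ :=
  Matrix.of fun l i =>
    if (i : ℕ) < k then v (l : ℕ) ^ (-(β (i : ℕ)))
    else v (l : ℕ) ^ (-(β ((i : ℕ) - k))) * Real.log (v (l : ℕ))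

namespace SigmaAux

open MeasureTheory Filter Topology Finset Set

/-- exponential polynomial -/
noncomputable def gFun (k : ℕ) (β A C : ℕ → ℝ) (x : ℝ) : ℝ :=
  ∑ i ∈ Finset.range k, Real.exp (-β i * x) * (A i + C i * x)

lemma tendsto_exp_neg {δ : ℝ} (hδ : 0 < δ) :
    Tendsto (fun x : ℝ => Real.exp (-δ * x)) atTop (𝓝 0) := by
  apply Real.tendsto_exp_atBot.comp
  have h : Tendsto (fun x : ℝ => -(δ * x)) atTop atBot :=
    tendsto_neg_atBot_iff.mpr ((tendsto_const_mul_atTop_iff_pos tendsto_id).mpr hδ)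
  exact Tendsto.congr (fun x => by ring) h

lemma tendsto_mul_exp_neg {δ : ℝ} (hδ : 0 < δ) :
    Tendsto (fun x : ℝ => x * Real.exp (-δ * x)) atTop (𝓝 0) := by
  have h1 : Tendsto (fun x : ℝ => δ * x) atTop atTop :=
    (tendsto_const_mul_atTop_iff_pos tendsto_id).mpr hδ
  have h2 := (Real.tendsto_pow_mul_exp_neg_atTop_nhds_zero 1).comp h1
  have h3 := h2.const_mul (1/δ)
  rw [mul_zero] at h3
  refine h3.congr fun x => ?_
  simp only [Function.comp, pow_one]
  field_simp

lemma gFun_ne_zero (k : ℕ) (β A C : ℕ → ℝ)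
    (hanti : ∀ i j, i < j → j < k → β j < β i)
    {i0 : ℕ} (hi0 : i0 < k) (hP : A i0 ≠ 0 ∨ C i0 ≠ 0)
    (hmax : ∀ i, i0 < i → i < k → A i = 0 ∧ C i = 0) :
    ¬ ∀ x : ℝ, gFun k β A C x = 0 := by
  intro hg
  have hsum : ∀ x : ℝ,
      ∑ i ∈ Finset.range (i0 + 1), Real.exp ((β i0 - β i) * x) * (A i + C i * x) = 0 := by
    intro x
    have h1 : ∑ i ∈ Finset.range k, Real.exp ((β i0 - β i) * x) * (A i + C i * x)
        = Real.exp (β i0 * x) * gFun k β A C x := by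
      rw [gFun, Finset.mul_sum]
      refine Finset.sum_congr rfl fun i _ => ?_
      rw [← mul_assoc, ← Real.exp_add]
      ring_nf
    have h2 : ∑ i ∈ Finset.range (i0 + 1), Real.exp ((β i0 - β i) * x) * (A i + C i * x)
        = ∑ i ∈ Finset.range k, Real.exp ((β i0 - β i) * x) * (A i + C i * x) := by
      refine Finset.sum_subset (Finset.range_subset_range.2 hi0) fun i hik hini0 => ?_
      have h3 : i0 < i := by
        simp only [Finset.mem_range] at hini0; omega
      have h4 := hmax i h3 (Finset.mem_range.1 hik)
      rw [h4.1, h4.2]; ring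
    rw [h2, h1, hg x, mul_zero]
  set h : ℝ → ℝ := fun x =>
    ∑ i ∈ Finset.range (i0 + 1), Real.exp ((β i0 - β i) * x) * (A i + C i * x) with hh
  have hzero : ∀ x, h x = 0 := hsum
  by_cases hC : C i0 ≠ 0
  · -- h x / x → C i0 ≠ 0, contradiction
    have heq : (fun x => h x / x) =ᶠ[atTop] fun x =>
        ∑ i ∈ Finset.range (i0 + 1), Real.exp ((β i0 - β i) * x) * (A i / x + C i) := by
      filter_upwards [eventually_gt_atTop (0:ℝ)] with x hx
      rw [hh, Finset.sum_div]
      refine Finset.sum_congr rfl fun i _ => ?_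
      field_simp
    have hterm : ∀ i ∈ Finset.range (i0 + 1),
        Tendsto (fun x : ℝ => Real.exp ((β i0 - β i) * x) * (A i / x + C i)) atTop
          (𝓝 (if i = i0 then C i0 else 0)) := by
      intro i hi
      have hfrac : Tendsto (fun x : ℝ => A i / x + C i) atTop (𝓝 (C i)) := by
        have h5 := (tendsto_inv_atTop_zero (𝕜 := ℝ)).const_mul (A i)
        rw [mul_zero] at h5
        have h6 := h5.add (tendsto_const_nhds (x := C i))
        rw [zero_add] at h6
        simpa [div_eq_mul_inv] using h6
      rcases eq_or_lt_of_le (Nat.lt_succ_iff.1 (Finset.mem_range.1 hi)) with he | hlt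
      · subst he
        simp only [if_pos rfl, sub_self, zero_mul, Real.exp_zero, one_mul]
        exact hfrac
      · have hδ : 0 < β i - β i0 := sub_pos.2 (hanti i i0 hlt hi0)
        have hexp : Tendsto (fun x : ℝ => Real.exp ((β i0 - β i) * x)) atTop (𝓝 0) :=
          (tendsto_exp_neg hδ).congr (fun x => by rw [neg_sub])
        have h8 := hexp.mul hfrac
        rw [zero_mul] at h8
        simpa [if_neg (by omega : ¬ i = i0)] using h8
    have hlim := tendsto_finset_sum _ hterm
    rw [Finset.sum_ite_eq' (Finset.range (i0+1)) i0 (fun _ => C i0)] at hlim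
    simp only [Finset.mem_range, Nat.lt_succ_self, if_pos] at hlim
    have hlim2 := hlim.congr' heq.symm
    have hzero2 : Tendsto (fun x => h x / x) atTop (𝓝 0) := by
      refine Tendsto.congr (fun x => ?_) (tendsto_const_nhds (x := (0:ℝ)))
      rw [hzero x, zero_div]
    exact hC (tendsto_nhds_unique hlim2 hzero2)
  · -- C i0 = 0, A i0 ≠ 0 : h x → A i0
    push_neg at hC
    have hA : A i0 ≠ 0 := hP.resolve_right (by simp [hC])
    have hterm : ∀ i ∈ Finset.range (i0 + 1),
        Tendsto (fun x : ℝ => Real.exp ((β i0 - β i) * x) * (A i + C i * x)) atTop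
          (𝓝 (if i = i0 then A i0 else 0)) := by
      intro i hi
      rcases eq_or_lt_of_le (Nat.lt_succ_iff.1 (Finset.mem_range.1 hi)) with he | hlt
      · subst he
        simp only [if_pos rfl, sub_self, zero_mul, Real.exp_zero, one_mul, hC, zero_mul,
          add_zero]
        exact tendsto_const_nhds
      · have hδ : 0 < β i - β i0 := sub_pos.2 (hanti i i0 hlt hi0)
        have hexp : Tendsto (fun x : ℝ => Real.exp ((β i0 - β i) * x)) atTop (𝓝 0) :=
          (tendsto_exp_neg hδ).congr (fun x => by rw [neg_sub])
        have hxexp : Tendsto (fun x : ℝ => x * Real.exp ((β i0 - β i) * x)) atTop (𝓝 0) :=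
          (tendsto_mul_exp_neg hδ).congr (fun x => by rw [neg_sub])
        have h9 : Tendsto (fun x : ℝ =>
            A i * Real.exp ((β i0 - β i) * x) + C i * (x * Real.exp ((β i0 - β i) * x)))
            atTop (𝓝 (A i * 0 + C i * 0)) :=
          (hexp.const_mul (A i)).add (hxexp.const_mul (C i))
        rw [mul_zero, mul_zero, add_zero] at h9
        have he2 : (fun x : ℝ =>
            A i * Real.exp ((β i0 - β i) * x) + C i * (x * Real.exp ((β i0 - β i) * x)))
            = fun x => Real.exp ((β i0 - β i) * x) * (A i + C i * x) := by
          funext x; ring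
        rw [he2] at h9
        simpa [if_neg (by omega : ¬ i = i0)] using h9
    have hlim := tendsto_finset_sum _ hterm
    rw [Finset.sum_ite_eq' (Finset.range (i0+1)) i0 (fun _ => A i0)] at hlim
    simp only [Finset.mem_range, Nat.lt_succ_self, if_pos] at hlim
    have hzero2 : Tendsto h atTop (𝓝 0) := by
      refine Tendsto.congr (fun x => (hzero x).symm) (tendsto_const_nhds (x := (0:ℝ)))
    rw [hh] at hzero2
    exact hA (tendsto_nhds_unique hlim hzero2)

lemma countable_zeros (k : ℕ) (β A C : ℕ → ℝ)
    (hanti : ∀ i j, i < j → j < k → β j < β i)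
    {i0 : ℕ} (hi0 : i0 < k) (hP : A i0 ≠ 0 ∨ C i0 ≠ 0)
    (hmax : ∀ i, i0 < i → i < k → A i = 0 ∧ C i = 0) :
    Set.Countable {x : ℝ | gFun k β A C x = 0} := by
  have hg : AnalyticOnNhd ℝ (gFun k β A C) Set.univ := by
    intro z _
    refine Finset.analyticAt_fun_sum _ fun i _ => ?_
    exact ((analyticAt_const.mul analyticAt_id).rexp).mul
      (analyticAt_const.add (analyticAt_const.mul analyticAt_id))
  have hnz := gFun_ne_zero k β A C hanti hi0 hP hmax
  have key : ∀ z : ℝ, ∀ᶠ x in 𝓝[≠] z, gFun k β A C x ≠ 0 := by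
    intro z
    rcases (hg z trivial).eventually_eq_zero_or_eventually_ne_zero with hcase | hcase
    · exfalso
      apply hnz
      intro x
      exact hg.eqOn_of_preconnected_of_eventuallyEq analyticOnNhd_const isPreconnected_univ
        (Set.mem_univ z) hcase (Set.mem_univ x)
    · exact hcase
  set Z := {x : ℝ | gFun k β A C x = 0} with hZ
  have hdisc : DiscreteTopology ↥Z := by
    rw [discreteTopology_subtype_iff]
    intro x hx
    rw [inf_principal_eq_bot]
    have hkey := key x
    rw [Filter.eventually_iff] at hkey
    have hZc : Zᶜ = {y : ℝ | gFun k β A C y ≠ 0} := by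
      ext y; simp [hZ]
    rw [hZc]
    exact hkey
  have : Countable ↥Z := TopologicalSpace.separableSpace_iff_countable.mp inferInstance
  exact Set.countable_coe_iff.mp this


/-- the row of values, written with `exp`/`log` so that it is measurable in `v`. -/
noncomputable def rowF (k : ℕ) (β : ℕ → ℝ) (v : ℝ) : Fin (2*k) → ℝ := fun i =>
  if (i : ℕ) < k then Real.exp (-β i * Real.log v)
  else Real.exp (-β ((i : ℕ) - k) * Real.log v) * Real.log v

/-- same, as a function of `x = log v`. -/
noncomputable def rowFx (k : ℕ) (β : ℕ → ℝ) (x : ℝ) : Fin (2*k) → ℝ := fun i =>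
  if (i : ℕ) < k then Real.exp (-β i * x)
  else Real.exp (-β ((i : ℕ) - k) * x) * x

lemma rowF_eq (k : ℕ) (β : ℕ → ℝ) (v : ℝ) : rowF k β v = rowFx k β (Real.log v) := rfl

/-- The linear combination of the rows is an exponential polynomial. -/
lemma combo_eq_gFun (k : ℕ) (β : ℕ → ℝ) (a : Fin (2*k) → ℝ) (x : ℝ) :
    ∑ i, a i * rowFx k β x i
      = gFun k β (fun i => if h : i < k then a ⟨i, by omega⟩ else 0)
          (fun i => if h : i < k then a ⟨k + i, by omega⟩ else 0) x := by
  set A : ℕ → ℝ := fun i => if h : i < k then a ⟨i, by omega⟩ else 0 with hA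
  set C : ℕ → ℝ := fun i => if h : i < k then a ⟨k + i, by omega⟩ else 0 with hC
  set aN : ℕ → ℝ := fun i => if h : i < 2*k then a ⟨i, h⟩ else 0 with haN
  set rN : ℕ → ℝ := fun i =>
    if i < k then Real.exp (-β i * x) else Real.exp (-β (i - k) * x) * x with hrN
  have h1 : ∑ i, a i * rowFx k β x i = ∑ i ∈ Finset.range (2*k), aN i * rN i := by
    rw [← Fin.sum_univ_eq_sum_range (fun i => aN i * rN i)]
    refine Finset.sum_congr rfl fun i _ => ?_
    have ha' : aN (i : ℕ) = a i := by simp [haN, i.isLt]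
    have hr' : rN (i : ℕ) = rowFx k β x i := rfl
    rw [ha', hr']
  rw [h1, show 2*k = k + k from two_mul k, Finset.sum_range_add, gFun,
    ← Finset.sum_add_distrib]
  refine Finset.sum_congr rfl fun i hi => ?_
  have hik : i < k := Finset.mem_range.1 hi
  have e1 : aN i = A i := by
    simp only [haN, hA, dif_pos (by omega : i < 2*k), dif_pos hik]
  have e2 : rN i = Real.exp (-β i * x) := by simp [hrN, hik]
  have e3 : aN (k + i) = C i := by
    simp only [haN, hC, dif_pos (by omega : k + i < 2*k), dif_pos hik]
  have e4 : rN (k + i) = Real.exp (-β i * x) * x := by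
    have hn : ¬ (k + i < k) := by omega
    simp [hrN, hn]
  rw [e1, e2, e3, e4]
  ring

lemma countable_bad_v (k : ℕ) (β : ℕ → ℝ) (hk : 1 ≤ k)
    (hanti : ∀ i j, i < j → j < k → β j < β i)
    (a : Fin (2*k) → ℝ) (ha : a ≠ 0) :
    Set.Countable {v : ℝ | v ∈ Set.Ioi (1:ℝ) ∧ ∑ i, a i * rowF k β v i = 0} := by
  classical
  set A : ℕ → ℝ := fun i => if h : i < k then a ⟨i, by omega⟩ else 0 with hA
  set C : ℕ → ℝ := fun i => if h : i < k then a ⟨k + i, by omega⟩ else 0 with hC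
  set P : ℕ → Prop := fun i => A i ≠ 0 ∨ C i ≠ 0 with hP
  -- there is an index where P holds
  obtain ⟨j, hj0⟩ := Function.ne_iff.mp ha
  have hj : a j ≠ 0 := by simpa using hj0
  have hex : ∃ m, m ≤ k - 1 ∧ P m := by
    by_cases hjk : (j : ℕ) < k
    · refine ⟨(j : ℕ), by omega, Or.inl ?_⟩
      rw [hA]
      simpa [dif_pos hjk] using hj
    · refine ⟨(j : ℕ) - k, by have := j.isLt; omega, Or.inr ?_⟩
      have hlt : (j : ℕ) - k < k := by have := j.isLt; omega
      have hfin : (⟨k + ((j : ℕ) - k), by omega⟩ : Fin (2*k)) = j := by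
        apply Fin.ext; simp; have := j.isLt; omega
      have hval : C ((j : ℕ) - k) = a j := by
        rw [hC]
        simp only [dif_pos hlt]
        congr 1
      rwa [hval]
  obtain ⟨m, hm, hPm⟩ := hex
  set i0 := Nat.findGreatest P (k - 1) with hi0def
  have hPi0 : P i0 := Nat.findGreatest_spec hm hPm
  have hi0k : i0 < k := by
    have := Nat.findGreatest_le (P := P) (k - 1)
    omega
  have hmax : ∀ i, i0 < i → i < k → A i = 0 ∧ C i = 0 := by
    intro i h1 h2
    have h5 := Nat.findGreatest_is_greatest (P := P) h1 (by omega)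
    simp only [hP] at h5
    push_neg at h5
    exact h5
  have hcount := countable_zeros k β A C hanti hi0k hPi0 hmax
  refine Set.Countable.mono ?_ (hcount.image Real.exp)
  intro v hv
  obtain ⟨hv1, hv2⟩ := hv
  refine ⟨Real.log v, ?_, Real.exp_log (by linarith [Set.mem_Ioi.1 hv1])⟩
  have := combo_eq_gFun k β a (Real.log v)
  rw [← hA, ← hC] at this
  rw [Set.mem_setOf_eq, ← this, ← rowF_eq]
  exact hv2


/-- Gram-determinant criterion for linear independence of finitely many vectors in `ℝⁿ`. -/
lemma linearIndependent_iff_gram {r n : ℕ} (f : Fin r → (Fin n → ℝ)) :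
    LinearIndependent ℝ f ↔
      (Matrix.of fun i j : Fin r => dotProduct (f i) (f j)).det ≠ 0 := by
  classical
  set M : Matrix (Fin r) (Fin n) ℝ := Matrix.of f with hM
  have hG : (Matrix.of fun i j : Fin r => dotProduct (f i) (f j)) = M * M.transpose := by
    ext i j
    simp [Matrix.mul_apply, dotProduct, hM]
  rw [hG]
  have key : (∃ c : Fin r → ℝ, c ≠ 0 ∧ Matrix.vecMul c M = 0) ↔ (M * M.transpose).det = 0 := by
    constructor
    · rintro ⟨c, hc, hcM⟩
      rw [← Matrix.exists_vecMul_eq_zero_iff]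
      exact ⟨c, hc, by rw [← Matrix.vecMul_vecMul, hcM, Matrix.zero_vecMul]⟩
    · intro hdet
      obtain ⟨c, hc, hcG⟩ := Matrix.exists_vecMul_eq_zero_iff.mpr hdet
      refine ⟨c, hc, ?_⟩
      set u := Matrix.vecMul c M with hu
      have h1 : dotProduct u u = 0 := by
        have h2 : u = M.transpose.mulVec c := (Matrix.mulVec_transpose M c).symm
        calc dotProduct u u = dotProduct u (M.transpose.mulVec c) := by rw [← h2]
          _ = dotProduct (Matrix.vecMul u M.transpose) c := Matrix.dotProduct_mulVec u M.transpose c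
          _ = dotProduct (Matrix.vecMul c (M * M.transpose)) c := by
              rw [hu, Matrix.vecMul_vecMul]
          _ = 0 := by rw [hcG, zero_dotProduct]
      exact dotProduct_self_eq_zero.mp h1
  have hcomb : ∀ c : Fin r → ℝ, (∑ i, c i • f i) = Matrix.vecMul c M := by
    intro c
    funext j
    simp [Matrix.vecMul, dotProduct, hM, Finset.sum_apply]
  constructor
  · intro hLI hdet
    obtain ⟨c, hc, hcM⟩ := key.mpr hdet
    have := Fintype.linearIndependent_iff.mp hLI c (by rw [hcomb c, hcM])
    exact hc (funext this)
  · intro hdet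
    rw [Fintype.linearIndependent_iff]
    intro c hc i
    by_contra hci
    exact hdet (key.mp ⟨c, fun h0 => hci (by rw [h0]; rfl), by rw [← hcomb c, hc]⟩)

/-- the rows: `v₁ = 1` together with the given points. -/
noncomputable def rowsOf (k : ℕ) (β : ℕ → ℝ) (m : ℕ) (w : Fin m → ℝ) :
    Fin (m+1) → (Fin (2*k) → ℝ) :=
  Fin.cons (rowF k β 1) (fun j => rowF k β (w j))

/-- the bad set at stage `m`. -/
def Bad (k : ℕ) (β : ℕ → ℝ) (m : ℕ) : Set (Fin m → ℝ) :=
  {w | (∀ j, 1 < w j) ∧ ¬ LinearIndependent ℝ (rowsOf k β m w)}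

lemma measurable_rowF (k : ℕ) (β : ℕ → ℝ) (i : Fin (2*k)) :
    Measurable fun v => rowF k β v i := by
  by_cases h : (i : ℕ) < k
  · simp only [rowF, if_pos h]
    exact Real.measurable_exp.comp (Real.measurable_log.const_mul _)
  · simp only [rowF, if_neg h]
    exact (Real.measurable_exp.comp (Real.measurable_log.const_mul _)).mul
      Real.measurable_log

lemma measurableSet_bad (k : ℕ) (β : ℕ → ℝ) (m : ℕ) :
    MeasurableSet (Bad k β m) := by
  classical
  have hBad : Bad k β m = {w : Fin m → ℝ | ∀ j, 1 < w j} ∩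
      {w : Fin m → ℝ | (Matrix.of fun i j : Fin (m+1) =>
        dotProduct (rowsOf k β m w i) (rowsOf k β m w j)).det = 0} := by
    ext w
    simp only [Bad, Set.mem_setOf_eq, Set.mem_inter_iff]
    constructor
    · rintro ⟨h1, h2⟩
      refine ⟨h1, ?_⟩
      by_contra h3
      exact h2 ((linearIndependent_iff_gram _).mpr h3)
    · rintro ⟨h1, h2⟩
      exact ⟨h1, fun h3 => ((linearIndependent_iff_gram _).mp h3) h2⟩
  rw [hBad]
  apply MeasurableSet.inter
  · have : {w : Fin m → ℝ | ∀ j, 1 < w j} = ⋂ j, {w : Fin m → ℝ | 1 < w j} := by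
      ext w; simp
    rw [this]
    exact MeasurableSet.iInter fun j =>
      measurableSet_lt measurable_const (measurable_pi_apply j)
  · have hrow : ∀ (i : Fin (m+1)) (l : Fin (2*k)),
        Measurable fun w : Fin m → ℝ => rowsOf k β m w i l := by
      intro i l
      refine Fin.cases ?_ ?_ i
      · simp only [rowsOf, Fin.cons_zero]
        exact measurable_const
      · intro j
        simp only [rowsOf, Fin.cons_succ]
        exact (measurable_rowF k β l).comp (measurable_pi_apply j)
    have hent : ∀ i j : Fin (m+1), Measurable fun w : Fin m → ℝ =>
        dotProduct (rowsOf k β m w i) (rowsOf k β m w j) := by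
      intro i j
      unfold dotProduct
      exact Finset.measurable_sum _ fun l _ => (hrow i l).mul (hrow j l)
    have hdet : Measurable fun w : Fin m → ℝ =>
        (Matrix.of fun i j : Fin (m+1) =>
          dotProduct (rowsOf k β m w i) (rowsOf k β m w j)).det := by
      simp only [Matrix.det_apply]
      apply Finset.measurable_sum
      intro σ _
      have he : (fun w : Fin m → ℝ => Equiv.Perm.sign σ •
            ∏ i, (Matrix.of fun i j : Fin (m+1) =>
              dotProduct (rowsOf k β m w i) (rowsOf k β m w j)) (σ i) i)
          = fun w : Fin m → ℝ => ((Equiv.Perm.sign σ : ℤ) : ℝ) *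
            ∏ i, dotProduct (rowsOf k β m w (σ i)) (rowsOf k β m w i) := by
        funext w
        simp [Units.smul_def, zsmul_eq_mul, Matrix.of_apply]
      rw [he]
      exact (Finset.measurable_prod _ fun i _ => hent (σ i) i).const_mul _
    exact hdet (measurableSet_singleton 0)


lemma rowF_one_ne_zero (k : ℕ) (β : ℕ → ℝ) (hk : 1 ≤ k) : rowF k β 1 ≠ 0 := by
  intro h
  have h0 : (0:ℕ) < 2*k := by omega
  have h1 := congrFun h ⟨0, h0⟩
  simp only [rowF, Pi.zero_apply] at h1
  rw [if_pos (show ((⟨0, h0⟩ : Fin (2*k)) : ℕ) < k by simp; omega)] at h1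
  rw [Real.log_one, mul_zero, Real.exp_zero] at h1
  exact one_ne_zero h1

lemma rowsOf_snoc (k : ℕ) (β : ℕ → ℝ) (m : ℕ) (w : Fin m → ℝ) (t : ℝ) :
    rowsOf k β (m+1) (Fin.snoc w t) = Fin.snoc (rowsOf k β m w) (rowF k β t) := by
  rw [rowsOf, rowsOf]
  have h1 : (fun j => rowF k β (Fin.snoc (α := fun _ => ℝ) w t j))
      = Fin.snoc (α := fun _ => Fin (2*k) → ℝ) (fun j => rowF k β (w j)) (rowF k β t) := by
    have h2 := Fin.comp_snoc (rowF k β) w t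
    exact h2
  rw [h1, Fin.cons_snoc_eq_snoc_cons]

lemma span_rows_ne_top {n r : ℕ} (hr : r < n) (f : Fin r → (Fin n → ℝ)) :
    Submodule.span ℝ (Set.range f) ≠ ⊤ := by
  classical
  intro htop
  have h2 := finrank_span_le_card (R := ℝ) (Set.range f)
  have h3 : (Set.range f).toFinset.card ≤ r := by
    rw [Set.toFinset_range]
    exact (Finset.card_image_le).trans (by simp)
  have h1 : Module.finrank ℝ (Submodule.span ℝ (Set.range f)) ≤ r := le_trans h2 h3
  rw [htop] at h1
  rw [finrank_top, Module.finrank_fin_fun] at h1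
  omega

lemma bad_null (k : ℕ) (β : ℕ → ℝ) (hk : 1 ≤ k)
    (hanti : ∀ i j, i < j → j < k → β j < β i) :
    ∀ m, m + 1 ≤ 2*k → volume (Bad k β m) = 0 := by
  intro m
  induction m with
  | zero =>
    intro _
    have hempty : Bad k β 0 = ∅ := by
      ext w
      simp only [Bad, Set.mem_setOf_eq, Set.mem_empty_iff_false, iff_false, not_and]
      intro _
      rw [not_not]
      letI : Unique (Fin (0+1)) := inferInstanceAs (Unique (Fin 1))
      apply linearIndependent_unique_iff.mpr
      exact rowF_one_ne_zero k β hk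
    simp [hempty]
  | succ m ih =>
    intro hm
    have IH := ih (by omega)
    classical
    set E := (MeasurableEquiv.piFinSuccAbove (fun _ : Fin (m+1) => ℝ) (Fin.last m)).trans
      MeasurableEquiv.prodComm with hE
    have hEmp : MeasurePreserving (⇑E) (volume : Measure (Fin (m+1) → ℝ))
        ((volume : Measure (Fin m → ℝ)).prod (volume : Measure ℝ)) := by
      have h1 := measurePreserving_piFinSuccAbove
        (fun _ : Fin (m+1) => (volume : Measure ℝ)) (Fin.last m)
      have h2 := Measure.measurePreserving_swap (μ := (volume : Measure ℝ))
        (ν := Measure.pi fun _ : Fin m => (volume : Measure ℝ))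
      have h3 := h2.comp h1
      have hc : ⇑E = Prod.swap ∘
          ⇑(MeasurableEquiv.piFinSuccAbove (fun _ : Fin (m+1) => ℝ) (Fin.last m)) := by
        rw [hE, MeasurableEquiv.coe_trans]
        rfl
      rw [hc]
      have hv1 : (volume : Measure (Fin (m+1) → ℝ)) = Measure.pi fun _ => volume := volume_pi
      have hv2 : (volume : Measure (Fin m → ℝ)) = Measure.pi fun _ => volume := volume_pi
      rw [hv1, hv2]
      exact h3
    have hsymm : ∀ (w : Fin m → ℝ) (t : ℝ), E.symm (w, t) = Fin.snoc w t := by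
      intro w t
      have hstep : E.symm (w, t)
          = (MeasurableEquiv.piFinSuccAbove (fun _ : Fin (m+1) => ℝ) (Fin.last m)).symm
              (t, w) := rfl
      rw [hstep]
      simp only [MeasurableEquiv.piFinSuccAbove_symm_apply, Fin.insertNthEquiv_apply]
      simp [Fin.snocEquiv]
    set T := E.symm ⁻¹' (Bad k β (m+1)) with hT
    have hTmeas : MeasurableSet T := E.symm.measurable (measurableSet_bad k β (m+1))
    have hpre : Bad k β (m+1) = E ⁻¹' T := by
      rw [hT]; ext x; simp
    rw [hpre, hEmp.measure_preimage hTmeas.nullMeasurableSet,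
      Measure.measure_prod_null hTmeas]
    have hae := measure_eq_zero_iff_ae_notMem.mp IH
    filter_upwards [hae] with w hw
    simp only [Pi.zero_apply]
    have hslice : Prod.mk w ⁻¹' T = {t : ℝ | Fin.snoc w t ∈ Bad k β (m+1)} := by
      ext t
      simp only [hT, Set.mem_preimage, Set.mem_setOf_eq, hsymm w t]
    rw [hslice]
    by_cases hgt : ∀ j, 1 < w j
    · have hLI : LinearIndependent ℝ (rowsOf k β m w) := by
        by_contra hno; exact hw ⟨hgt, hno⟩
      have hspan := span_rows_ne_top (by omega : m + 1 < 2*k) (rowsOf k β m w)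
      obtain ⟨φ, hφ0, hφker⟩ :=
        Submodule.exists_le_ker_of_lt_top _ (lt_top_iff_ne_top.mpr hspan)
      set a : Fin (2*k) → ℝ := fun i => φ (fun j => if i = j then 1 else 0) with ha
      have ha0 : a ≠ 0 := by
        intro h0
        apply hφ0
        apply LinearMap.ext
        intro x
        rw [LinearMap.pi_apply_eq_sum_univ φ x]
        have hz : ∀ i, φ (fun j => if i = j then 1 else 0) = 0 := by
          intro i
          have := congrFun h0 i
          rw [ha] at this
          simpa using this
        simp [hz]
      have hsub : {t : ℝ | Fin.snoc w t ∈ Bad k β (m+1)}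
          ⊆ {v : ℝ | v ∈ Set.Ioi (1:ℝ) ∧ ∑ i, a i * rowF k β v i = 0} := by
        intro t ht
        obtain ⟨h1, h2⟩ := ht
        have h1t : (1:ℝ) < t := by
          have := h1 (Fin.last m)
          rwa [Fin.snoc_last] at this
        rw [rowsOf_snoc, linearIndependent_fin_snoc] at h2
        push_neg at h2
        have hmem := h2 hLI
        have hker : φ (rowF k β t) = 0 := LinearMap.mem_ker.mp (hφker hmem)
        refine ⟨h1t, ?_⟩
        rw [LinearMap.pi_apply_eq_sum_univ φ (rowF k β t)] at hker
        rw [← hker]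
        refine Finset.sum_congr rfl fun i _ => ?_
        rw [smul_eq_mul, mul_comm, ha]
      exact measure_mono_null hsub
        ((countable_bad_v k β hk hanti a ha0).measure_zero _)
    · push_neg at hgt
      obtain ⟨j0, hj0⟩ := hgt
      refine measure_mono_null (fun t ht => ?_) (measure_empty (μ := volume))
      obtain ⟨h1, _⟩ := ht
      have := h1 (Fin.castSucc j0)
      rw [Fin.snoc_castSucc] at this
      exact absurd this (not_lt.2 hj0)

end SigmaAux

theorem sigmaMatrix_ae_invertible
    (k : ℕ) (hk : 1 ≤ k) (β : ℕ → ℝ)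
    (hβ2 : β 0 < 2) (hβnn : 0 ≤ β (k - 1))
    (hanti : ∀ i j, i < j → j < k → β j < β i) :
    volume {vb : Fin (2 * k - 1) → ℝ |
      (∀ j, 1 < vb j) ∧
      (sigmaMatrix k β (fun l =>
        if l = 0 then 1
        else if h : l - 1 < 2 * k - 1 then vb ⟨l - 1, h⟩ else 0)).det = 0} = 0 := by
  classical
  have h2k : 2 * k - 1 + 1 = 2 * k := by omega
  refine measure_mono_null ?_ (SigmaAux.bad_null k β hk hanti (2*k-1) (by omega))
  rintro vb ⟨hgt, hdet⟩
  refine ⟨hgt, ?_⟩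
  intro hLI
  set vfun : ℕ → ℝ := fun l =>
    if l = 0 then 1 else if h : l - 1 < 2 * k - 1 then vb ⟨l - 1, h⟩ else 0 with hvfun
  set e : Fin (2*k) ≃ Fin (2*k-1+1) := finCongr h2k.symm with he
  have hLI' : LinearIndependent ℝ (SigmaAux.rowsOf k β (2*k-1) vb ∘ e) :=
    (linearIndependent_equiv e).mpr hLI
  have hrows : (fun l : Fin (2*k) => (sigmaMatrix k β vfun) l)
      = SigmaAux.rowsOf k β (2*k-1) vb ∘ e := by
    funext l
    rcases l with ⟨lv, hlv⟩
    cases lv with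
    | zero =>
      have hleft : (SigmaAux.rowsOf k β (2*k-1) vb ∘ e) ⟨0, hlv⟩ = SigmaAux.rowF k β 1 := rfl
      rw [hleft]
      funext i
      have hv0 : vfun ((⟨0, hlv⟩ : Fin (2*k)) : ℕ) = 1 := by simp [hvfun]
      by_cases hik : (i : ℕ) < k
      · simp [sigmaMatrix, SigmaAux.rowF, hik, hv0, Real.one_rpow, Real.log_one]
      · simp [sigmaMatrix, SigmaAux.rowF, hik, hv0, Real.one_rpow, Real.log_one]
    | succ lv =>
      have hlv' : lv < 2*k - 1 := by omega
      have hleft : (SigmaAux.rowsOf k β (2*k-1) vb ∘ e) ⟨lv+1, hlv⟩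
          = SigmaAux.rowF k β (vb ⟨lv, hlv'⟩) := rfl
      rw [hleft]
      funext i
      have hvs : vfun ((⟨lv+1, hlv⟩ : Fin (2*k)) : ℕ) = vb ⟨lv, hlv'⟩ := by
        simp only [hvfun]
        rw [if_neg (by omega : ¬ (lv + 1 = 0))]
        simp only [Nat.add_sub_cancel]
        exact dif_pos hlv'
      have hpos : (0:ℝ) < vb ⟨lv, hlv'⟩ := lt_trans one_pos (hgt _)
      by_cases hik : (i : ℕ) < k
      · simp only [sigmaMatrix, Matrix.of_apply, SigmaAux.rowF, if_pos hik, hvs]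
        rw [Real.rpow_def_of_pos hpos, mul_comm]
      · simp only [sigmaMatrix, Matrix.of_apply, SigmaAux.rowF, if_neg hik, hvs]
        rw [Real.rpow_def_of_pos hpos, mul_comm (Real.log (vb ⟨lv, hlv'⟩))]
  rw [← hrows] at hLI'
  have hunit : IsUnit (sigmaMatrix k β vfun) :=
    Matrix.linearIndependent_rows_iff_isUnit.mp hLI'
  have hdet' : IsUnit (sigmaMatrix k β vfun).det :=
    (Matrix.isUnit_iff_isUnit_det _).mp hunit
  rw [hdet] at hdet'
  exact (isUnit_iff_ne_zero.mp hdet') rfl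
end

section
/- Let 0 < β_1 < 2 and β_1/2 ≤ β_j < β_1, let A_−, ε > 0, and let f, g : ℝ → [0, ∞) be measurable functions satisfying |f(x) − 1| ≥ A_−·|x|^{β_1 − β_j} and g(x) ≥ A_−·|x|^{−1−β_1} for all x with 0 < |x| < ε, and additionally |f(x) − 1| ≤ 1 for 0 < |x| < ε. Then ∫_{−ε}^{ε} (|f(x) − 1|^2 ∧ |f(x) − 1|) · g(x) dx = +∞. -/
open MeasureTheory
open scoped ENNReal

theorem lintegral_min_eq_top_of_lower_bounds
    (β₁ βj A ε : ℝ) (hβ₁0 : 0 < β₁) (hβ₁2 : β₁ < 2)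
    (hβj1 : β₁ / 2 ≤ βj) (hβj2 : βj < β₁) (hA : 0 < A) (hε : 0 < ε)
    (f g : ℝ → ℝ) (hf : Measurable f) (hg : Measurable g)
    (hfnn : ∀ x, 0 ≤ f x) (hgnn : ∀ x, 0 ≤ g x)
    (hflow : ∀ x : ℝ, x ≠ 0 → |x| < ε → A * |x| ^ (β₁ - βj) ≤ |f x - 1|)
    (hglow : ∀ x : ℝ, x ≠ 0 → |x| < ε → A * |x| ^ (-(1 + β₁)) ≤ g x)
    (hfle : ∀ x : ℝ, x ≠ 0 → |x| < ε → |f x - 1| ≤ 1) :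
    ∫⁻ x in Set.Ioo (-ε) ε,
      ENNReal.ofReal (min (|f x - 1| ^ 2) |f x - 1| * g x) = ⊤ := by
  set c : ℝ := β₁ - 2 * βj - 1 with hc_def
  have hc : c ≤ -1 := by simp only [hc_def]; linarith
  -- the comparison function is not integrable on (0, ε)
  have hint : ∫⁻ x in Set.Ioo (0 : ℝ) ε, ENNReal.ofReal (A ^ 3 * x ^ c) = ⊤ := by
    by_contra h
    have hmeas : AEStronglyMeasurable (fun x : ℝ => A ^ 3 * x ^ c)
        (volume.restrict (Set.Ioo (0 : ℝ) ε)) := by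
      refine (ContinuousOn.aestronglyMeasurable ?_ measurableSet_Ioo)
      exact continuousOn_const.mul (fun x hx =>
        (Real.continuousAt_rpow_const x c (Or.inl (ne_of_gt hx.1))).continuousWithinAt)
    have hnn : 0 ≤ᵐ[volume.restrict (Set.Ioo (0 : ℝ) ε)] fun x => A ^ 3 * x ^ c := by
      filter_upwards [ae_restrict_mem measurableSet_Ioo] with x hx
      exact mul_nonneg (by positivity) (Real.rpow_nonneg hx.1.le _)
    have hInt : Integrable (fun x => A ^ 3 * x ^ c)
        (volume.restrict (Set.Ioo (0 : ℝ) ε)) :=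
      (lintegral_ofReal_ne_top_iff_integrable hmeas hnn).mp h
    have hInt' : IntegrableOn (fun x : ℝ => x ^ c) (Set.Ioo (0 : ℝ) ε) := by
      have := hInt.const_mul (A ^ 3)⁻¹
      have hA3 : (A : ℝ) ^ 3 ≠ 0 := by positivity
      show Integrable (fun x : ℝ => x ^ c) (volume.restrict (Set.Ioo (0 : ℝ) ε))
      simpa [← mul_assoc, inv_mul_cancel₀ hA3] using this
    have := (intervalIntegral.integrableOn_Ioo_rpow_iff hε).mp hInt'
    linarith
  refine eq_top_iff.mpr ?_
  calc (⊤ : ℝ≥0∞) = ∫⁻ x in Set.Ioo (0 : ℝ) ε, ENNReal.ofReal (A ^ 3 * x ^ c) := hint.symm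
    _ ≤ ∫⁻ x in Set.Ioo (0 : ℝ) ε,
        ENNReal.ofReal (min (|f x - 1| ^ 2) |f x - 1| * g x) := by
        refine lintegral_mono_ae ?_
        filter_upwards [ae_restrict_mem measurableSet_Ioo] with x hx
        obtain ⟨hx0, hxε⟩ := hx
        have hxne : x ≠ 0 := ne_of_gt hx0
        have habs : |x| = x := abs_of_pos hx0
        have hxεa : |x| < ε := by rw [habs]; exact hxε
        set t := |f x - 1| with ht_def
        have ht1 : t ≤ 1 := hfle x hxne hxεa
        have ht0 : 0 ≤ t := abs_nonneg _
        have hmin : min (t ^ 2) t = t ^ 2 := by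
          refine min_eq_left ?_
          calc t ^ 2 = t * t := sq t
            _ ≤ 1 * t := by apply mul_le_mul_of_nonneg_right ht1 ht0
            _ = t := one_mul t
        have hfl : A * x ^ (β₁ - βj) ≤ t := by
          have := hflow x hxne hxεa; rwa [habs] at this
        have hgl : A * x ^ (-(1 + β₁)) ≤ g x := by
          have := hglow x hxne hxεa; rwa [habs] at this
        have heq : A ^ 3 * x ^ c = (A * x ^ (β₁ - βj)) ^ 2 * (A * x ^ (-(1 + β₁))) := by
          rw [show c = (β₁ - βj) + ((β₁ - βj) + (-(1 + β₁))) by simp only [hc_def]; ring,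
            Real.rpow_add hx0, Real.rpow_add hx0]
          ring
        refine ENNReal.ofReal_le_ofReal ?_
        rw [hmin, heq]
        have h1 : (A * x ^ (β₁ - βj)) ^ 2 ≤ t ^ 2 := by
          apply pow_le_pow_left₀ (by positivity) hfl
        exact mul_le_mul h1 hgl (by positivity) (by positivity)
    _ ≤ ∫⁻ x in Set.Ioo (-ε) ε,
        ENNReal.ofReal (min (|f x - 1| ^ 2) |f x - 1| * g x) := by
        apply lintegral_mono_set
        intro x hx
        exact ⟨lt_of_lt_of_le (neg_lt_zero.mpr hε) hx.1.le, hx.2⟩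
end
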